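/- For n ≥ 2k, the multiplicity of the irreducible S_n-module S^{λ̄} in (ℂ^n)^{⊗k} (with ℂ^n the permutation representation) depends only on λ and k, not on n, where λ̄ = (n − |λ|, λ₁, λ₂, ...). -/

import Mathlib

/-- The action of `S_n` on `(ℂ^n)^{⊗k}`, realized as the free vector space on
multi-indices `Fin k → Fin n` with the diagonal (pointwise) permutation action. -/
noncomputable def tensorPermRep (n k : ℕ) :
    Representation ℂ (Equiv.Perm (Fin n)) ((Fin k → Fin n) →₀ ℂ) :=
  { toFun := fun g => Finsupp.lmapDomain ℂ ℂ (g • ·)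
    map_one' := by ext; simp
    map_mul' := fun x y => by ext; simp [mul_smul] }

/-- The sum over the column group of a tableau `T` of shape `Λ` (the permutations of
`{1,…,n}` preserving every column of `T`), with signs, in the group algebra. -/
noncomputable def colGroupSum {n : ℕ} {Λ : YoungDiagram} (T : Fin n ≃ Λ.cells) :
    MonoidAlgebra ℂ (Equiv.Perm (Fin n)) :=
  ∑ σ : Equiv.Perm (Fin n),
    if ∀ i, ((T (σ i)) : ℕ × ℕ).2 = ((T i) : ℕ × ℕ).2 then
      ((Equiv.Perm.sign σ : ℤ) : ℂ) • MonoidAlgebra.single σ (1 : ℂ)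
    else 0

/-- The sum over the row group of a tableau `T` of shape `Λ` (the permutations of
`{1,…,n}` preserving every row of `T`) in the group algebra. -/
noncomputable def rowGroupSum {n : ℕ} {Λ : YoungDiagram} (T : Fin n ≃ Λ.cells) :
    MonoidAlgebra ℂ (Equiv.Perm (Fin n)) :=
  ∑ τ : Equiv.Perm (Fin n),
    if ∀ i, ((T (τ i)) : ℕ × ℕ).1 = ((T i) : ℕ × ℕ).1 then
      MonoidAlgebra.single τ (1 : ℂ)
    else 0

/-- The Young symmetrizer of a tableau `T`. -/
noncomputable def youngSymmetrizer {n : ℕ} {Λ : YoungDiagram} (T : Fin n ≃ Λ.cells) :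
    MonoidAlgebra ℂ (Equiv.Perm (Fin n)) :=
  colGroupSum T * rowGroupSum T

/-- The multiplicity of the irreducible `S_n`-module `S^Λ` in `(ℂ^n)^{⊗k}`: in
characteristic zero it equals the dimension of the image of the Young symmetrizer of a
tableau of shape `Λ` acting on `(ℂ^n)^{⊗k}`. -/
noncomputable def tensorMultiplicity (n k : ℕ) {Λ : YoungDiagram} (T : Fin n ≃ Λ.cells) : ℕ :=
  Module.finrank ℂ (LinearMap.range ((tensorPermRep n k).asAlgebraHom (youngSymmetrizer T)))

namespace TensorStab

open Finset Equiv Equiv.Perm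

open scoped Classical

variable {k n : ℕ}

/-- Pattern equivalence of cell-valued multi-indices : same rows, same collisions. -/
def Rel (h h' : Fin k → ℕ × ℕ) : Prop :=
  (∀ p, (h p).1 = (h' p).1) ∧ ∀ p q, h p = h q ↔ h' p = h' q

lemma Rel.rfl {h : Fin k → ℕ × ℕ} : Rel h h := ⟨fun _ => _root_.rfl, fun _ _ => Iff.rfl⟩

lemma Rel.symm {h h' : Fin k → ℕ × ℕ} (H : Rel h h') : Rel h' h :=
  ⟨fun p => (H.1 p).symm, fun p q => (H.2 p q).symm⟩

lemma Rel.trans {h h' h'' : Fin k → ℕ × ℕ} (H : Rel h h') (H' : Rel h' h'') : Rel h h'' :=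
  ⟨fun p => (H.1 p).trans (H'.1 p), fun p q => (H.2 p q).trans (H'.2 p q)⟩

section OneSide

variable {Λ : YoungDiagram} (T : Fin n ≃ Λ.cells)

/-- cell-valued version of a multi-index -/
def cf (g : Fin k → Fin n) : Fin k → ℕ × ℕ := fun p => ((T (g p)) : ℕ × ℕ)

/-- the column group, as a finset -/
noncomputable def CG : Finset (Equiv.Perm (Fin n)) :=
  univ.filter fun σ => ∀ i, ((T (σ i)) : ℕ × ℕ).2 = ((T i) : ℕ × ℕ).2

/-- the row group, as a finset -/
noncomputable def RG : Finset (Equiv.Perm (Fin n)) :=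
  univ.filter fun τ => ∀ i, ((T (τ i)) : ℕ × ℕ).1 = ((T i) : ℕ × ℕ).1

lemma mem_CG {σ : Equiv.Perm (Fin n)} :
    σ ∈ CG T ↔ ∀ i, ((T (σ i)) : ℕ × ℕ).2 = ((T i) : ℕ × ℕ).2 := by
  simp [CG]

lemma mem_RG {τ : Equiv.Perm (Fin n)} :
    τ ∈ RG T ↔ ∀ i, ((T (τ i)) : ℕ × ℕ).1 = ((T i) : ℕ × ℕ).1 := by
  simp [RG]

lemma one_mem_CG : 1 ∈ CG T := by simp [mem_CG]

lemma one_mem_RG : 1 ∈ RG T := by simp [mem_RG]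

lemma mul_mem_CG {σ σ' : Equiv.Perm (Fin n)} (h : σ ∈ CG T) (h' : σ' ∈ CG T) :
    σ * σ' ∈ CG T := by
  rw [mem_CG] at *
  intro i
  rw [Equiv.Perm.mul_apply, h (σ' i), h' i]

lemma mul_mem_RG {τ τ' : Equiv.Perm (Fin n)} (h : τ ∈ RG T) (h' : τ' ∈ RG T) :
    τ * τ' ∈ RG T := by
  rw [mem_RG] at *
  intro i
  rw [Equiv.Perm.mul_apply, h (τ' i), h' i]

lemma inv_mem_CG {σ : Equiv.Perm (Fin n)} (h : σ ∈ CG T) : σ⁻¹ ∈ CG T := by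
  rw [mem_CG] at *
  intro i
  have := h (σ⁻¹ i)
  rwa [show σ (σ⁻¹ i) = i from σ.apply_symm_apply i, eq_comm] at this

lemma inv_mem_RG {τ : Equiv.Perm (Fin n)} (h : τ ∈ RG T) : τ⁻¹ ∈ RG T := by
  rw [mem_RG] at *
  intro i
  have := h (τ⁻¹ i)
  rwa [show τ (τ⁻¹ i) = i from τ.apply_symm_apply i, eq_comm] at this

end OneSide

section OneSideB

variable {Λ : YoungDiagram} (T : Fin n ≃ Λ.cells)

lemma perm_smul_eq_comp (σ : Equiv.Perm (Fin n)) (g : Fin k → Fin n) :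
    σ • g = σ ∘ g := rfl

lemma rep_perm_single (σ : Equiv.Perm (Fin n)) (g : Fin k → Fin n) (c : ℂ) :
    tensorPermRep n k σ (Finsupp.single g c) = Finsupp.single (σ ∘ g) c := by
  show Finsupp.lmapDomain ℂ ℂ (σ • ·) (Finsupp.single g c) = _
  rw [Finsupp.lmapDomain_apply, Finsupp.mapDomain_single]
  rfl

lemma colSum_apply (v : (Fin k → Fin n) →₀ ℂ) :
    (tensorPermRep n k).asAlgebraHom (colGroupSum T) v =
      ∑ σ ∈ CG T, ((Equiv.Perm.sign σ : ℤ) : ℂ) • (tensorPermRep n k σ v) := by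
  rw [colGroupSum, map_sum, LinearMap.sum_apply, CG, Finset.sum_filter]
  refine Finset.sum_congr rfl fun σ _ => ?_
  by_cases h : ∀ i, ((T (σ i)) : ℕ × ℕ).2 = ((T i) : ℕ × ℕ).2
  · simp only [if_pos h, map_smul, LinearMap.smul_apply,
      Representation.asAlgebraHom_single_one]
  · simp only [if_neg h, map_zero, LinearMap.zero_apply]

lemma rowSum_apply (v : (Fin k → Fin n) →₀ ℂ) :
    (tensorPermRep n k).asAlgebraHom (rowGroupSum T) v =
      ∑ τ ∈ RG T, (tensorPermRep n k τ v) := by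
  rw [rowGroupSum, map_sum, LinearMap.sum_apply, RG, Finset.sum_filter]
  refine Finset.sum_congr rfl fun τ _ => ?_
  by_cases h : ∀ i, ((T (τ i)) : ℕ × ℕ).1 = ((T i) : ℕ × ℕ).1
  · simp only [if_pos h, Representation.asAlgebraHom_single_one]
  · simp only [if_neg h, map_zero, LinearMap.zero_apply]

lemma young_apply (v : (Fin k → Fin n) →₀ ℂ) :
    (tensorPermRep n k).asAlgebraHom (youngSymmetrizer T) v =
      (tensorPermRep n k).asAlgebraHom (colGroupSum T)
        ((tensorPermRep n k).asAlgebraHom (rowGroupSum T) v) := by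
  rw [youngSymmetrizer, map_mul]
  rfl

lemma young_apply_single (g : Fin k → Fin n) :
    (tensorPermRep n k).asAlgebraHom (youngSymmetrizer T) (Finsupp.single g 1) =
      ∑ τ ∈ RG T, ∑ σ ∈ CG T,
        ((Equiv.Perm.sign σ : ℤ) : ℂ) • Finsupp.single (σ ∘ (τ ∘ g)) (1 : ℂ) := by
  rw [young_apply, rowSum_apply, map_sum]
  refine Finset.sum_congr rfl fun τ _ => ?_
  rw [rep_perm_single, colSum_apply]
  refine Finset.sum_congr rfl fun σ _ => ?_
  rw [rep_perm_single]

end OneSideB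

section OneSideC

variable {Λ : YoungDiagram} (T : Fin n ≃ Λ.cells)

lemma cell_eq_iff {a b : Fin n} : ((T a) : ℕ × ℕ) = ((T b) : ℕ × ℕ) ↔ a = b :=
  ⟨fun h => T.injective (Subtype.ext h), fun h => by rw [h]⟩

/-- `Rel` on `cf`s, unfolded to the level of indices. -/
lemma rel_cf_iff {g g' : Fin k → Fin n} :
    Rel (cf T g) (cf T g') ↔
      ((∀ p, ((T (g p)) : ℕ × ℕ).1 = ((T (g' p)) : ℕ × ℕ).1) ∧
        ∀ p q, g p = g q ↔ g' p = g' q) := by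
  unfold Rel cf
  constructor
  · rintro ⟨h1, h2⟩
    refine ⟨h1, fun p q => ?_⟩
    rw [← cell_eq_iff T, ← cell_eq_iff T]
    exact h2 p q
  · rintro ⟨h1, h2⟩
    refine ⟨h1, fun p q => ?_⟩
    rw [cell_eq_iff T, cell_eq_iff T]
    exact h2 p q

lemma exists_row_perm_aux (N : ℕ) :
    ∀ g g' : Fin k → Fin n, (univ.filter fun p => g p ≠ g' p).card ≤ N →
      Rel (cf T g) (cf T g') → ∃ τ ∈ RG T, ⇑τ ∘ g = g' := by
  induction N with
  | zero =>
    intro g g' hc _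
    refine ⟨1, one_mem_RG T, funext fun p => ?_⟩
    by_contra hp
    have hmem : p ∈ univ.filter fun p => g p ≠ g' p := by
      simp only [mem_filter, mem_univ, true_and]
      simpa using hp
    have := Finset.card_pos.mpr ⟨p, hmem⟩
    omega
  | succ N ih =>
    intro g g' hc H
    rw [rel_cf_iff] at H
    by_cases hgg : g = g'
    · exact ⟨1, one_mem_RG T, by funext p; simp [hgg]⟩
    · have hex : ∃ p, g p ≠ g' p := by
        by_contra hno
        push_neg at hno
        exact hgg (funext hno)
      obtain ⟨p, hp⟩ := hex
      set t := Equiv.swap (g p) (g' p) with ht_def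
      have ht : t ∈ RG T := by
        rw [mem_RG]
        intro i
        rcases eq_or_ne i (g p) with rfl | h1
        · rw [ht_def, Equiv.swap_apply_left]
          exact (H.1 p).symm
        · rcases eq_or_ne i (g' p) with rfl | h2
          · rw [ht_def, Equiv.swap_apply_right]
            exact H.1 p
          · rw [ht_def, Equiv.swap_apply_of_ne_of_ne h1 h2]
      have htrow : ∀ i, ((T (t i)) : ℕ × ℕ).1 = ((T i) : ℕ × ℕ).1 := (mem_RG T).mp ht
      set g1 := ⇑t ∘ g with hg1
      have hrel1 : Rel (cf T g1) (cf T g') := by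
        rw [rel_cf_iff]
        constructor
        · intro q
          have h0 : ((T (g1 q)) : ℕ × ℕ).1 = ((T (g q)) : ℕ × ℕ).1 := htrow (g q)
          rw [h0]
          exact H.1 q
        · intro q r
          have h0 : g1 q = g1 r ↔ g q = g r := by
            constructor
            · intro h; exact t.injective h
            · intro h; rw [hg1]; simp [h]
          rw [h0]
          exact H.2 q r
      have hagree : ∀ q, g q = g' q → g1 q = g' q := by
        intro q hq
        have hne1 : g q ≠ g p := by
          intro he
          have h2 : g' q = g' p := (H.2 q p).mp he
          rw [hq] at he
          rw [h2] at he
          exact hp he.symm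
        have hne2 : g q ≠ g' p := by
          intro he
          have h2 : g' q = g' p := by rw [← hq]; exact he
          have h3 : g q = g p := (H.2 q p).mpr h2
          rw [h3] at he
          exact hp he
        rw [hg1]
        simp only [Function.comp_apply, ht_def]
        rw [Equiv.swap_apply_of_ne_of_ne hne1 hne2]
        exact hq
      have hsub : (univ.filter fun q => g1 q ≠ g' q) ⊆
          (univ.filter fun q => g q ≠ g' q).erase p := by
        intro q hq
        simp only [mem_filter, mem_univ, true_and] at hq
        rw [Finset.mem_erase]
        constructor
        · rintro rfl
          apply hq
          rw [hg1]
          simp only [Function.comp_apply, ht_def, Equiv.swap_apply_left]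
        · simp only [mem_filter, mem_univ, true_and]
          intro hcon
          exact hq (hagree q hcon)
      have hpmem : p ∈ univ.filter fun q => g q ≠ g' q := by
        simp only [mem_filter, mem_univ, true_and]; exact hp
      have hcard : (univ.filter fun q => g1 q ≠ g' q).card ≤ N := by
        have h1 := Finset.card_le_card hsub
        have h2 := Finset.card_erase_of_mem hpmem
        omega
      obtain ⟨τ, hτ, hτg⟩ := ih g1 g' hcard hrel1
      refine ⟨τ * t, mul_mem_RG T hτ ht, ?_⟩
      funext q
      have := congrFun hτg q
      simpa [Equiv.Perm.mul_apply, hg1] using this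

lemma exists_row_perm {g g' : Fin k → Fin n} (H : Rel (cf T g) (cf T g')) :
    ∃ τ ∈ RG T, ⇑τ ∘ g = g' :=
  exists_row_perm_aux T _ g g' le_rfl H

/-- the sum of basis vectors over a pattern class -/
noncomputable def clsSum (h : Fin k → ℕ × ℕ) : (Fin k → Fin n) →₀ ℂ :=
  ∑ g' ∈ univ.filter (fun g' => Rel (cf T g') h), Finsupp.single g' 1

/-- the image of a pattern class sum under the signed column sum; these are the spanning
vectors of the image of the Young symmetrizer -/
noncomputable def w (h : Fin k → ℕ × ℕ) : (Fin k → Fin n) →₀ ℂ :=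
  (tensorPermRep n k).asAlgebraHom (colGroupSum T) (clsSum T h)

lemma row_maps_to {τ : Equiv.Perm (Fin n)} (hτ : τ ∈ RG T) (g : Fin k → Fin n) :
    Rel (cf T (⇑τ ∘ g)) (cf T g) := by
  rw [rel_cf_iff]
  constructor
  · intro p
    exact ((mem_RG T).mp hτ) (g p)
  · intro p q
    constructor
    · intro h; exact τ.injective h
    · intro h; simp only [Function.comp_apply, h]

lemma fiber_card {g g' : Fin k → Fin n} (hg' : Rel (cf T g') (cf T g)) :
    ((RG T).filter fun τ : Equiv.Perm (Fin n) => ⇑τ ∘ g = g').card =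
      ((RG T).filter fun τ : Equiv.Perm (Fin n) => ⇑τ ∘ g = g).card := by
  obtain ⟨τ₀, hτ₀, hτ₀g⟩ := exists_row_perm T hg'.symm
  refine Finset.card_bij' (fun τ _ => τ₀⁻¹ * τ) (fun τ _ => τ₀ * τ) ?_ ?_ ?_ ?_
  · intro τ hτ
    simp only [mem_filter] at hτ ⊢
    refine ⟨mul_mem_RG T (inv_mem_RG T hτ₀) hτ.1, ?_⟩
    funext q
    have h1 := congrFun hτ.2 q
    have h2 := congrFun hτ₀g q
    simp only [Function.comp_apply] at h1 h2 ⊢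
    rw [Equiv.Perm.mul_apply, h1, ← h2, show τ₀⁻¹ (τ₀ (g q)) = g q from τ₀.symm_apply_apply _]
  · intro τ hτ
    simp only [mem_filter] at hτ ⊢
    refine ⟨mul_mem_RG T hτ₀ hτ.1, ?_⟩
    funext q
    have h1 := congrFun hτ.2 q
    have h2 := congrFun hτ₀g q
    simp only [Function.comp_apply] at h1 h2 ⊢
    rw [Equiv.Perm.mul_apply, h1, h2]
  · intro τ _
    simp [← mul_assoc]
  · intro τ _
    simp [← mul_assoc]

lemma row_orbit (g : Fin k → Fin n) :
    (tensorPermRep n k).asAlgebraHom (rowGroupSum T) (Finsupp.single g 1) =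
      (((RG T).filter fun τ : Equiv.Perm (Fin n) => ⇑τ ∘ g = g).card : ℂ) • clsSum T (cf T g) := by
  rw [rowSum_apply]
  have h1 : ∀ τ ∈ RG T, tensorPermRep n k τ (Finsupp.single g (1 : ℂ)) =
      Finsupp.single (⇑τ ∘ g) 1 := fun τ _ => rep_perm_single τ g 1
  rw [Finset.sum_congr rfl h1]
  rw [← Finset.sum_fiberwise_of_maps_to (g := fun τ : Equiv.Perm (Fin n) => ⇑τ ∘ g)
    (t := univ.filter (fun g' => Rel (cf T g') (cf T g)))
    (fun τ hτ => by
      simp only [mem_filter, mem_univ, true_and]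
      exact row_maps_to T hτ g)]
  rw [clsSum, Finset.smul_sum]
  refine Finset.sum_congr rfl fun g' hg' => ?_
  simp only [mem_filter, mem_univ, true_and] at hg'
  have h2 : ∀ τ ∈ (RG T).filter (fun τ : Equiv.Perm (Fin n) => ⇑τ ∘ g = g'), Finsupp.single (⇑τ ∘ g) (1:ℂ) =
      Finsupp.single g' 1 := by
    intro τ hτ
    simp only [mem_filter] at hτ
    rw [hτ.2]
  rw [Finset.sum_congr rfl h2, Finset.sum_const, fiber_card T hg']
  rw [Nat.cast_smul_eq_nsmul]

lemma stab_card_pos (g : Fin k → Fin n) :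
    0 < ((RG T).filter fun τ : Equiv.Perm (Fin n) => ⇑τ ∘ g = g).card := by
  refine Finset.card_pos.mpr ⟨1, ?_⟩
  simp only [mem_filter]
  refine ⟨one_mem_RG T, ?_⟩
  funext q
  simp

lemma young_single (g : Fin k → Fin n) :
    (tensorPermRep n k).asAlgebraHom (youngSymmetrizer T) (Finsupp.single g 1) =
      (((RG T).filter fun τ : Equiv.Perm (Fin n) => ⇑τ ∘ g = g).card : ℂ) • w T (cf T g) := by
  rw [young_apply, row_orbit, map_smul, w]

end OneSideC

section OneSideD

variable {Λ : YoungDiagram} (T : Fin n ≃ Λ.cells)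

lemma w_congr {h h' : Fin k → ℕ × ℕ} (H : Rel h h') : w T h = w T h' := by
  have hset : univ.filter (fun g' : Fin k → Fin n => Rel (cf T g') h) =
      univ.filter (fun g' : Fin k → Fin n => Rel (cf T g') h') := by
    apply Finset.filter_congr
    intro g' _
    exact ⟨fun hr => hr.trans H, fun hr => hr.trans H.symm⟩
  rw [w, w, clsSum, clsSum, hset]

lemma w_zero {h : Fin k → ℕ × ℕ} (H : ∀ g' : Fin k → Fin n, ¬ Rel (cf T g') h) :
    w T h = 0 := by
  rw [w, clsSum]
  have : univ.filter (fun g' : Fin k → Fin n => Rel (cf T g') h) = ∅ := by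
    apply Finset.filter_false_of_mem
    intro g' _
    exact H g'
  rw [this, Finset.sum_empty, map_zero]

lemma comp_eq_iff (σ : Equiv.Perm (Fin n)) (g' g₀ : Fin k → Fin n) :
    ⇑σ ∘ g' = g₀ ↔ g' = ⇑σ⁻¹ ∘ g₀ := by
  constructor
  · rintro rfl
    funext p
    simp
  · rintro rfl
    funext p
    simp

lemma w_apply (h : Fin k → ℕ × ℕ) (g₀ : Fin k → Fin n) :
    (w T h) g₀ = ∑ σ ∈ CG T, ((Equiv.Perm.sign σ : ℤ) : ℂ) *
      (if Rel (cf T (⇑σ⁻¹ ∘ g₀)) h then 1 else 0) := by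
  rw [w, colSum_apply, Finsupp.finset_sum_apply]
  refine Finset.sum_congr rfl fun σ hσ => ?_
  rw [Finsupp.smul_apply, smul_eq_mul]
  congr 1
  rw [clsSum, map_sum, Finsupp.finset_sum_apply]
  have h1 : ∀ g' ∈ univ.filter (fun g' : Fin k → Fin n => Rel (cf T g') h),
      (tensorPermRep n k σ (Finsupp.single g' 1)) g₀ =
        if g' = ⇑σ⁻¹ ∘ g₀ then (1 : ℂ) else 0 := by
    intro g' _
    rw [rep_perm_single, Finsupp.single_apply]
    congr 1
    rw [eq_iff_iff]
    exact comp_eq_iff σ g' g₀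
  rw [Finset.sum_congr rfl h1, Finset.sum_ite_eq' _ (⇑σ⁻¹ ∘ g₀)]
  simp only [mem_filter, mem_univ, true_and]

lemma range_young :
    LinearMap.range ((tensorPermRep n k).asAlgebraHom (youngSymmetrizer T)) =
      Submodule.span ℂ (Set.range fun g : Fin k → Fin n => w T (cf T g)) := by
  have heq : (tensorPermRep n k).asAlgebraHom (youngSymmetrizer T) =
      Finsupp.linearCombination ℂ (fun g : Fin k → Fin n =>
        (tensorPermRep n k).asAlgebraHom (youngSymmetrizer T) (Finsupp.single g 1)) := by
    apply Finsupp.lhom_ext'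
    intro g
    apply LinearMap.ext
    intro c
    simp [Finsupp.linearCombination_single, LinearMap.comp_apply,
      Finsupp.lsingle_apply]
    rw [← map_smul]
    congr 1
    rw [Finsupp.smul_single, smul_eq_mul, mul_one]
  rw [heq, Finsupp.range_linearCombination]
  apply le_antisymm
  · rw [Submodule.span_le]
    rintro v ⟨g, rfl⟩
    dsimp only
    rw [young_single]
    exact Submodule.smul_mem _ _ (Submodule.subset_span ⟨g, rfl⟩)
  · rw [Submodule.span_le]
    rintro v ⟨g, rfl⟩
    dsimp only
    have hpos := stab_card_pos T g
    have hne : ((((RG T).filter fun τ : Equiv.Perm (Fin n) => ⇑τ ∘ g = g).card : ℂ)) ≠ 0 :=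
      Nat.cast_ne_zero.mpr hpos.ne'
    have hw : w T (cf T g) =
        (((RG T).filter fun τ : Equiv.Perm (Fin n) => ⇑τ ∘ g = g).card : ℂ)⁻¹ •
        ((tensorPermRep n k).asAlgebraHom (youngSymmetrizer T) (Finsupp.single g 1)) := by
      rw [young_single, smul_smul, inv_mul_cancel₀ hne, one_smul]
    rw [hw]
    exact Submodule.smul_mem _ _ (Submodule.subset_span ⟨g, rfl⟩)

end OneSideD

/-- The core cells: the `k` first cells of row 0, together with the cells of the shifted
copy of `lam`. These are the same for all diagrams `Λ` obtained by padding `lam`. -/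
def coreCells (lam : YoungDiagram) (k : ℕ) : Finset (ℕ × ℕ) :=
  ((Finset.range k).image fun j => (0, j)) ∪ lam.cells.image (fun c => (c.1 + 1, c.2))

section Structural

variable {lam : YoungDiagram}

lemma lam_rowLen_le_card (lam : YoungDiagram) (i : ℕ) : lam.rowLen i ≤ lam.card := by
  rw [YoungDiagram.rowLen_eq_card]
  exact Finset.card_le_card (Finset.filter_subset _ _)

lemma lam_col_lt_k (hlam : lam.card ≤ k) {d : ℕ × ℕ} (hd : d ∈ lam.cells) : d.2 < k := by
  rw [YoungDiagram.mem_cells] at hd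
  have h1 : d.2 < lam.rowLen d.1 := by
    rw [← YoungDiagram.mem_iff_lt_rowLen]
    simpa using hd
  have h2 : lam.rowLen d.1 ≤ lam.rowLen 0 := lam.rowLen_anti 0 d.1 (Nat.zero_le _)
  have h3 := lam_rowLen_le_card lam 0
  omega

lemma mem_coreCells {c : ℕ × ℕ} :
    c ∈ coreCells lam k ↔ (c.1 = 0 ∧ c.2 < k) ∨ ∃ d ∈ lam.cells, c = (d.1 + 1, d.2) := by
  unfold coreCells
  simp only [Finset.mem_union, Finset.mem_image, Finset.mem_range]
  constructor
  · rintro (⟨j, hj, rfl⟩ | ⟨d, hd, rfl⟩)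
    · exact Or.inl ⟨rfl, hj⟩
    · exact Or.inr ⟨d, hd, rfl⟩
  · rintro (⟨h1, h2⟩ | ⟨d, hd, rfl⟩)
    · exact Or.inl ⟨c.2, h2, by rw [← h1]⟩
    · exact Or.inr ⟨d, hd, rfl⟩

lemma coreCells_card (hlam : lam.card ≤ k) : (coreCells lam k).card = k + lam.card := by
  have hinj1 : Function.Injective (fun j => ((0, j) : ℕ × ℕ)) := by
    intro a b hab
    simpa using hab
  have hinj2 : Function.Injective (fun c : ℕ × ℕ => (c.1 + 1, c.2)) := by
    intro a b hab
    simpa [Prod.ext_iff] using hab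
  have hdis : Disjoint ((Finset.range k).image fun j => ((0, j) : ℕ × ℕ))
      (lam.cells.image (fun c => (c.1 + 1, c.2))) := by
    rw [Finset.disjoint_left]
    rintro c hc hc'
    simp only [Finset.mem_image, Finset.mem_range] at hc hc'
    obtain ⟨j, _, rfl⟩ := hc
    obtain ⟨d, _, hd⟩ := hc'
    simp [Prod.ext_iff] at hd
  unfold coreCells
  rw [Finset.card_union_of_disjoint hdis, Finset.card_image_of_injective _ hinj1,
    Finset.card_image_of_injective _ hinj2, Finset.card_range]

variable {Λ : YoungDiagram}
variable (hΛ : Λ.cells = ((Finset.range (n - lam.card)).image fun j => (0, j)) ∪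
      lam.cells.image (fun c => (c.1 + 1, c.2)))

include hΛ

lemma mem_cells_iff {c : ℕ × ℕ} :
    c ∈ Λ.cells ↔ (c.1 = 0 ∧ c.2 < n - lam.card) ∨ ∃ d ∈ lam.cells, c = (d.1 + 1, d.2) := by
  rw [hΛ]
  simp only [Finset.mem_union, Finset.mem_image, Finset.mem_range]
  constructor
  · rintro (⟨j, hj, rfl⟩ | ⟨d, hd, rfl⟩)
    · exact Or.inl ⟨rfl, hj⟩
    · exact Or.inr ⟨d, hd, rfl⟩
  · rintro (⟨h1, h2⟩ | ⟨d, hd, rfl⟩)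
    · exact Or.inl ⟨c.2, h2, by rw [← h1]⟩
    · exact Or.inr ⟨d, hd, rfl⟩

lemma coreCells_subset (hlam : lam.card ≤ k) (hn : 2 * k ≤ n) :
    coreCells lam k ⊆ Λ.cells := by
  intro c hc
  rw [mem_coreCells] at hc
  rw [mem_cells_iff hΛ]
  rcases hc with ⟨h1, h2⟩ | h
  · exact Or.inl ⟨h1, by omega⟩
  · exact Or.inr h

lemma mem_coreCells_iff_of_mem (hlam : lam.card ≤ k) {c : ℕ × ℕ} (hc : c ∈ Λ.cells) :
    c ∈ coreCells lam k ↔ c.2 < k := by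
  constructor
  · intro h
    rw [mem_coreCells] at h
    rcases h with ⟨_, h2⟩ | ⟨d, hd, rfl⟩
    · exact h2
    · have hck := lam_col_lt_k hlam hd
      exact hck
  · intro h2
    rw [mem_cells_iff hΛ] at hc
    rw [mem_coreCells]
    rcases hc with ⟨ha, _⟩ | h
    · exact Or.inl ⟨ha, h2⟩
    · exact Or.inr h

lemma noncore_row_zero (hlam : lam.card ≤ k) {c : ℕ × ℕ} (hc : c ∈ Λ.cells)
    (h2 : ¬ c.2 < k) : c.1 = 0 := by
  rw [mem_cells_iff hΛ] at hc
  rcases hc with ⟨h1, _⟩ | ⟨d, hd, rfl⟩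
  · exact h1
  · have hck := lam_col_lt_k hlam hd
    exact absurd hck h2

lemma noncore_eq (hlam : lam.card ≤ k) {c c' : ℕ × ℕ} (hc : c ∈ Λ.cells) (hc' : c' ∈ Λ.cells)
    (h2 : ¬ c.2 < k) (hcol : c.2 = c'.2) : c = c' := by
  have e1 := noncore_row_zero hΛ hlam hc h2
  have e2 := noncore_row_zero hΛ hlam hc' (by omega)
  exact Prod.ext (e1.trans e2.symm) hcol

lemma CG_fix (hlam : lam.card ≤ k) {T : Fin n ≃ Λ.cells} {σ : Equiv.Perm (Fin n)}
    (hσ : σ ∈ CG T) {a : Fin n} (h : ¬ ((T a : ℕ × ℕ).2 < k)) : σ a = a := by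
  have hcol := (mem_CG T).mp hσ a
  have heq : ((T (σ a)) : ℕ × ℕ) = ((T a) : ℕ × ℕ) := by
    apply noncore_eq hΛ hlam (T (σ a)).2 (T a).2
    · rw [hcol]; exact h
    · exact hcol
  exact (cell_eq_iff T).mp heq

end Structural

section Compare

variable {k n m : ℕ} {lam : YoungDiagram} {Λn Λm : YoungDiagram}
variable (hlam : lam.card ≤ k) (hn : 2 * k ≤ n) (hm : 2 * k ≤ m) (hnm : n ≤ m)
variable (hΛn : Λn.cells = ((Finset.range (n - lam.card)).image fun j => (0, j)) ∪
      lam.cells.image (fun c => (c.1 + 1, c.2)))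
variable (hΛm : Λm.cells = ((Finset.range (m - lam.card)).image fun j => (0, j)) ∪
      lam.cells.image (fun c => (c.1 + 1, c.2)))
variable (Tn : Fin n ≃ Λn.cells) (Tm : Fin m ≃ Λm.cells)

include hΛn hΛm hnm in
lemma cells_sub : Λn.cells ⊆ Λm.cells := by
  intro c hc
  rw [mem_cells_iff hΛn] at hc
  rw [mem_cells_iff hΛm]
  rcases hc with ⟨h1, h2⟩ | h
  · exact Or.inl ⟨h1, by omega⟩
  · exact Or.inr h

/-- the embedding of index sets induced by the inclusion of cells -/
noncomputable def emb : Fin n → Fin m := fun a =>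
  Tm.symm ⟨((Tn a) : ℕ × ℕ), cells_sub hnm hΛn hΛm (Tn a).2⟩

lemma emb_cell (a : Fin n) :
    ((Tm (emb hnm hΛn hΛm Tn Tm a)) : ℕ × ℕ) = ((Tn a) : ℕ × ℕ) := by
  rw [emb, Equiv.apply_symm_apply]

lemma emb_inj : Function.Injective (emb hnm hΛn hΛm Tn Tm) := by
  intro a b hab
  apply (cell_eq_iff Tn).mp
  rw [← emb_cell hnm hΛn hΛm Tn Tm a, ← emb_cell hnm hΛn hΛm Tn Tm b, hab]

lemma mem_range_emb_iff {b : Fin m} :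
    b ∈ Set.range (emb hnm hΛn hΛm Tn Tm) ↔ ((Tm b) : ℕ × ℕ) ∈ Λn.cells := by
  constructor
  · rintro ⟨a, rfl⟩
    rw [emb_cell]
    exact (Tn a).2
  · intro hb
    refine ⟨Tn.symm ⟨((Tm b) : ℕ × ℕ), hb⟩, ?_⟩
    apply Tm.injective
    apply Subtype.ext
    rw [emb_cell, Equiv.apply_symm_apply]

include hlam hn in
lemma notin_range_noncore {b : Fin m} (hb : b ∉ Set.range (emb hnm hΛn hΛm Tn Tm)) :
    ¬ (((Tm b) : ℕ × ℕ).2 < k) := by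
  intro hcore
  apply hb
  rw [mem_range_emb_iff]
  apply coreCells_subset hΛn hlam hn
  exact (mem_coreCells_iff_of_mem hΛm hlam (Tm b).2).mpr hcore

/-- the embedding as a `Function.Embedding` -/
noncomputable def embE : Fin n ↪ Fin m :=
  ⟨emb hnm hΛn hΛm Tn Tm, emb_inj hnm hΛn hΛm Tn Tm⟩

/-- extension of a permutation along `emb` -/
noncomputable def EP (σ : Equiv.Perm (Fin n)) : Equiv.Perm (Fin m) :=
  σ.viaFintypeEmbedding (embE hnm hΛn hΛm Tn Tm)

lemma EP_emb (σ : Equiv.Perm (Fin n)) (a : Fin n) :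
    EP hnm hΛn hΛm Tn Tm σ (emb hnm hΛn hΛm Tn Tm a) = emb hnm hΛn hΛm Tn Tm (σ a) :=
  Equiv.Perm.viaFintypeEmbedding_apply_image σ (embE hnm hΛn hΛm Tn Tm) a

lemma EP_notin (σ : Equiv.Perm (Fin n)) {b : Fin m}
    (hb : b ∉ Set.range (emb hnm hΛn hΛm Tn Tm)) :
    EP hnm hΛn hΛm Tn Tm σ b = b :=
  Equiv.Perm.viaFintypeEmbedding_apply_notMem_range σ (embE hnm hΛn hΛm Tn Tm) hb

lemma EP_sign (σ : Equiv.Perm (Fin n)) :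
    Equiv.Perm.sign (EP hnm hΛn hΛm Tn Tm σ) = Equiv.Perm.sign σ := by
  rw [EP, Equiv.Perm.viaFintypeEmbedding, Equiv.Perm.sign_extendDomain]

include hlam hn hm in
lemma EP_mem_CG {σ : Equiv.Perm (Fin n)} (hσ : σ ∈ CG Tn) :
    EP hnm hΛn hΛm Tn Tm σ ∈ CG Tm := by
  rw [mem_CG]
  intro b
  by_cases hb : b ∈ Set.range (emb hnm hΛn hΛm Tn Tm)
  · obtain ⟨a, rfl⟩ := hb
    rw [EP_emb, emb_cell, emb_cell]
    exact (mem_CG Tn).mp hσ a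
  · rw [EP_notin hnm hΛn hΛm Tn Tm σ hb]

include hlam hn hm in
lemma EP_surj {σ' : Equiv.Perm (Fin m)} (hσ' : σ' ∈ CG Tm) :
    ∃ σ ∈ CG Tn, EP hnm hΛn hΛm Tn Tm σ = σ' := by
  have key : ∀ a : Fin n, ∃ b : Fin n,
      σ' (emb hnm hΛn hΛm Tn Tm a) = emb hnm hΛn hΛm Tn Tm b := by
    intro a
    by_cases hc : ((Tn a) : ℕ × ℕ).2 < k
    · have h1 : ((Tm (σ' (emb hnm hΛn hΛm Tn Tm a))) : ℕ × ℕ).2 < k := by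
        rw [(mem_CG Tm).mp hσ' (emb hnm hΛn hΛm Tn Tm a), emb_cell]
        exact hc
      have h2 : ((Tm (σ' (emb hnm hΛn hΛm Tn Tm a))) : ℕ × ℕ) ∈ Λn.cells := by
        apply coreCells_subset hΛn hlam hn
        exact (mem_coreCells_iff_of_mem hΛm hlam (Tm _).2).mpr h1
      obtain ⟨b, hb⟩ := (mem_range_emb_iff hnm hΛn hΛm Tn Tm).mpr h2
      exact ⟨b, hb.symm⟩
    · have h1 : σ' (emb hnm hΛn hΛm Tn Tm a) = emb hnm hΛn hΛm Tn Tm a := by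
        apply CG_fix hΛm hlam hσ'
        rw [emb_cell]
        exact hc
      exact ⟨a, h1⟩
  choose φ hφ using key
  have hφinj : Function.Injective φ := by
    intro a b hab
    apply emb_inj hnm hΛn hΛm Tn Tm
    apply σ'.injective
    rw [hφ a, hφ b, hab]
  have hφbij : Function.Bijective φ := Finite.injective_iff_bijective.mp hφinj
  set σ := Equiv.ofBijective φ hφbij with hσdef
  have hσa : ∀ a, σ a = φ a := fun a => rfl
  refine ⟨σ, ?_, ?_⟩
  · rw [mem_CG]
    intro a
    rw [hσa a, ← emb_cell hnm hΛn hΛm Tn Tm (φ a), ← hφ a,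
      (mem_CG Tm).mp hσ' (emb hnm hΛn hΛm Tn Tm a), emb_cell]
  · apply Equiv.ext
    intro b
    by_cases hb : b ∈ Set.range (emb hnm hΛn hΛm Tn Tm)
    · obtain ⟨a, rfl⟩ := hb
      rw [EP_emb, hσa, ← hφ a]
    · rw [EP_notin hnm hΛn hΛm Tn Tm σ hb]
      symm
      apply CG_fix hΛm hlam hσ'
      exact notin_range_noncore hlam hn hnm hΛn hΛm Tn Tm hb

end Compare

section OneSideE

variable {Λ : YoungDiagram} (T : Fin n ≃ Λ.cells)

/-- the sum of the coordinates of `x` over a pattern class -/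
noncomputable def Xc (x : (Fin k → Fin n) →₀ ℂ) (h : Fin k → ℕ × ℕ) : ℂ :=
  ∑ f ∈ univ.filter (fun f : Fin k → Fin n => Rel (cf T f) h), x f

lemma Xc_congr (x : (Fin k → Fin n) →₀ ℂ) {h h' : Fin k → ℕ × ℕ} (H : Rel h h') :
    Xc T x h = Xc T x h' := by
  unfold Xc
  congr 1
  apply Finset.filter_congr
  intro f _
  exact ⟨fun hr => hr.trans H, fun hr => hr.trans H.symm⟩

lemma linComb_w_apply {ι : Type*} [Fintype ι] (pat : ι → (Fin k → ℕ × ℕ)) (x : ι →₀ ℂ)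
    (g₀ : Fin k → Fin n) :
    ((Finsupp.linearCombination ℂ fun i => w T (pat i)) x) g₀ =
      ∑ σ ∈ CG T, ((Equiv.Perm.sign σ : ℤ) : ℂ) *
        (∑ i ∈ univ.filter (fun i => Rel (pat i) (cf T (⇑σ ∘ g₀))), x i) := by
  rw [Finsupp.linearCombination_apply, Finsupp.sum_fintype _ _ (fun i => by rw [zero_smul]),
    Finsupp.finset_sum_apply]
  have h1 : ∀ i ∈ (univ : Finset ι), (x i • w T (pat i)) g₀
      = ∑ σ ∈ CG T, ((Equiv.Perm.sign σ : ℤ) : ℂ) *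
          (if Rel (pat i) (cf T (⇑σ⁻¹ ∘ g₀)) then x i else 0) := by
    intro i _
    rw [Finsupp.smul_apply, smul_eq_mul, w_apply, Finset.mul_sum]
    refine Finset.sum_congr rfl fun σ _ => ?_
    by_cases hR : Rel (pat i) (cf T (⇑σ⁻¹ ∘ g₀))
    · rw [if_pos hR, if_pos hR.symm]
      ring
    · rw [if_neg hR, if_neg (fun hc => hR hc.symm)]
      ring
  rw [Finset.sum_congr rfl h1, Finset.sum_comm]
  have h2 : ∀ σ ∈ CG T,
      (∑ i : ι, ((Equiv.Perm.sign σ : ℤ) : ℂ) *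
        (if Rel (pat i) (cf T (⇑σ⁻¹ ∘ g₀)) then x i else 0)) =
      ((Equiv.Perm.sign σ : ℤ) : ℂ) *
        (∑ i ∈ univ.filter (fun i => Rel (pat i) (cf T (⇑σ⁻¹ ∘ g₀))), x i) := by
    intro σ _
    rw [← Finset.mul_sum, Finset.sum_filter]
  rw [Finset.sum_congr rfl h2]
  refine Finset.sum_bij' (fun σ _ => σ⁻¹) (fun σ _ => σ⁻¹) ?_ ?_ ?_ ?_ ?_
  · intro σ hσ
    exact inv_mem_CG T hσ
  · intro σ hσ
    exact inv_mem_CG T hσ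
  · intro σ _
    simp only [inv_inv]
  · intro σ _
    simp only [inv_inv]
  · intro σ _
    simp only [Equiv.Perm.sign_inv, inv_inv]

end OneSideE

section CompareB

variable {k n m : ℕ} {lam : YoungDiagram} {Λn Λm : YoungDiagram}
variable (hlam : lam.card ≤ k) (hn : 2 * k ≤ n) (hm : 2 * k ≤ m) (hnm : n ≤ m)
variable (hΛn : Λn.cells = ((Finset.range (n - lam.card)).image fun j => (0, j)) ∪
      lam.cells.image (fun c => (c.1 + 1, c.2)))
variable (hΛm : Λm.cells = ((Finset.range (m - lam.card)).image fun j => (0, j)) ∪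
      lam.cells.image (fun c => (c.1 + 1, c.2)))
variable (Tn : Fin n ≃ Λn.cells) (Tm : Fin m ≃ Λm.cells)

/-- the comparison map into the smaller tensor space -/
noncomputable def Phin : ((Fin k → Fin m) →₀ ℂ) →ₗ[ℂ] ((Fin k → Fin n) →₀ ℂ) :=
  Finsupp.linearCombination ℂ (fun f : Fin k → Fin m => w Tn (cf Tm f))

/-- the comparison map into the larger tensor space -/
noncomputable def Phim : ((Fin k → Fin m) →₀ ℂ) →ₗ[ℂ] ((Fin k → Fin m) →₀ ℂ) :=
  Finsupp.linearCombination ℂ (fun f : Fin k → Fin m => w Tm (cf Tm f))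

/-- the coefficient functional on the `n` side -/
noncomputable def Fn (x : (Fin k → Fin m) →₀ ℂ) (g₀ : Fin k → Fin n) : ℂ :=
  ∑ σ ∈ CG Tn, ((Equiv.Perm.sign σ : ℤ) : ℂ) * Xc Tm x (cf Tn (⇑σ ∘ g₀))

/-- the coefficient functional on the `m` side -/
noncomputable def Fm (x : (Fin k → Fin m) →₀ ℂ) (f₀ : Fin k → Fin m) : ℂ :=
  ∑ σ ∈ CG Tm, ((Equiv.Perm.sign σ : ℤ) : ℂ) * Xc Tm x (cf Tm (⇑σ ∘ f₀))

lemma Phin_apply (x : (Fin k → Fin m) →₀ ℂ) (g₀ : Fin k → Fin n) :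
    (Phin Tn Tm x) g₀ = Fn Tn Tm x g₀ := by
  rw [Phin, linComb_w_apply, Fn]
  refine Finset.sum_congr rfl fun σ _ => ?_
  congr 1

lemma Phim_apply (x : (Fin k → Fin m) →₀ ℂ) (f₀ : Fin k → Fin m) :
    (Phim Tm x) f₀ = Fm Tm x f₀ := by
  rw [Phim, linComb_w_apply, Fm]
  refine Finset.sum_congr rfl fun σ _ => ?_
  congr 1

lemma Phin_zero_iff (x : (Fin k → Fin m) →₀ ℂ) :
    Phin Tn Tm x = 0 ↔ ∀ g₀ : Fin k → Fin n, Fn Tn Tm x g₀ = 0 := by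
  rw [Finsupp.ext_iff]
  constructor
  · intro h g₀
    rw [← Phin_apply Tn Tm x g₀, h g₀]
    rfl
  · intro h g₀
    rw [Phin_apply Tn Tm x g₀, h g₀]
    rfl

lemma Phim_zero_iff (x : (Fin k → Fin m) →₀ ℂ) :
    Phim Tm x = 0 ↔ ∀ f₀ : Fin k → Fin m, Fm Tm x f₀ = 0 := by
  rw [Finsupp.ext_iff]
  constructor
  · intro h f₀
    rw [← Phim_apply Tm x f₀, h f₀]
    rfl
  · intro h f₀
    rw [Phim_apply Tm x f₀, h f₀]
    rfl

include hlam hn hm in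
lemma transport (x : (Fin k → Fin m) →₀ ℂ) (g₀ : Fin k → Fin n) :
    Fn Tn Tm x g₀ = Fm Tm x (emb hnm hΛn hΛm Tn Tm ∘ g₀) := by
  unfold Fn Fm
  refine Finset.sum_bij (fun σ _ => EP hnm hΛn hΛm Tn Tm σ) ?_ ?_ ?_ ?_
  · intro σ hσ
    exact EP_mem_CG hlam hn hm hnm hΛn hΛm Tn Tm hσ
  · intro σ₁ h₁ σ₂ h₂ heq
    have heq' : EP hnm hΛn hΛm Tn Tm σ₁ = EP hnm hΛn hΛm Tn Tm σ₂ := heq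
    apply Equiv.ext
    intro a
    apply emb_inj hnm hΛn hΛm Tn Tm
    rw [← EP_emb hnm hΛn hΛm Tn Tm σ₁ a, ← EP_emb hnm hΛn hΛm Tn Tm σ₂ a, heq']
  · intro σ' hσ'
    obtain ⟨σ, hσ, hEσ⟩ := EP_surj hlam hn hm hnm hΛn hΛm Tn Tm hσ'
    exact ⟨σ, hσ, hEσ⟩
  · intro σ hσ
    have hfun : cf Tm (⇑(EP hnm hΛn hΛm Tn Tm σ) ∘ (emb hnm hΛn hΛm Tn Tm ∘ g₀)) =
        cf Tn (⇑σ ∘ g₀) := by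
      funext p
      show ((Tm (EP hnm hΛn hΛm Tn Tm σ (emb hnm hΛn hΛm Tn Tm (g₀ p)))) : ℕ × ℕ) = _
      rw [EP_emb, emb_cell]
      rfl
    rw [EP_sign, hfun]

end CompareB

section CompareC

variable {k n m : ℕ} {lam : YoungDiagram} {Λn Λm : YoungDiagram}
variable (hlam : lam.card ≤ k) (hn : 2 * k ≤ n) (hm : 2 * k ≤ m) (hnm : n ≤ m)
variable (hΛn : Λn.cells = ((Finset.range (n - lam.card)).image fun j => (0, j)) ∪
      lam.cells.image (fun c => (c.1 + 1, c.2)))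
variable (hΛm : Λm.cells = ((Finset.range (m - lam.card)).image fun j => (0, j)) ∪
      lam.cells.image (fun c => (c.1 + 1, c.2)))
variable (Tn : Fin n ≃ Λn.cells) (Tm : Fin m ≃ Λm.cells)

lemma coreCells_col_lt (hlam : lam.card ≤ k) {c : ℕ × ℕ} (hc : c ∈ coreCells lam k) :
    c.2 < k := by
  rw [mem_coreCells] at hc
  rcases hc with ⟨_, h2⟩ | ⟨d, hd, rfl⟩
  · exact h2
  · have := lam_col_lt_k hlam hd
    exact this

include hlam hm hΛm in
lemma Fm_cancel (x : (Fin k → Fin m) →₀ ℂ) (f₀ : Fin k → Fin m) {a b : ℕ × ℕ}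
    (ha : a ∈ coreCells lam k) (hb : b ∈ coreCells lam k) (hab : a ≠ b) (hcol : a.2 = b.2)
    (hua : ∀ p, cf Tm f₀ p ≠ a) (hub : ∀ p, cf Tm f₀ p ≠ b) :
    Fm Tm x f₀ = 0 := by
  have ham : a ∈ Λm.cells := coreCells_subset hΛm hlam hm ha
  have hbm : b ∈ Λm.cells := coreCells_subset hΛm hlam hm hb
  set va := Tm.symm ⟨a, ham⟩ with hva
  set vb := Tm.symm ⟨b, hbm⟩ with hvb
  have hcva : ((Tm va) : ℕ × ℕ) = a := by rw [hva, Equiv.apply_symm_apply]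
  have hcvb : ((Tm vb) : ℕ × ℕ) = b := by rw [hvb, Equiv.apply_symm_apply]
  have hvab : va ≠ vb := by
    intro h
    apply hab
    rw [← hcva, ← hcvb, h]
  set t := Equiv.swap va vb with htdef
  have htmem : t ∈ CG Tm := by
    rw [mem_CG]
    intro i
    rcases eq_or_ne i va with rfl | h1
    · rw [htdef, Equiv.swap_apply_left, hcva, hcvb]
      exact hcol.symm
    · rcases eq_or_ne i vb with rfl | h2
      · rw [htdef, Equiv.swap_apply_right, hcva, hcvb]
        exact hcol
      · rw [htdef, Equiv.swap_apply_of_ne_of_ne h1 h2]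
  have hfix : ⇑t ∘ f₀ = f₀ := by
    funext p
    have h1 : f₀ p ≠ va := by
      intro h
      exact hua p (by rw [cf, h]; exact hcva)
    have h2 : f₀ p ≠ vb := by
      intro h
      exact hub p (by rw [cf, h]; exact hcvb)
    exact Equiv.swap_apply_of_ne_of_ne h1 h2
  rw [Fm]
  apply Finset.sum_involution (g := fun σ _ => σ * t)
  · intro σ hσ
    have hcomp : ⇑(σ * t) ∘ f₀ = ⇑σ ∘ f₀ := by
      funext p
      show σ (t (f₀ p)) = σ (f₀ p)
      rw [show t (f₀ p) = f₀ p from congrFun hfix p]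
    rw [hcomp]
    have hsgn : Equiv.Perm.sign (σ * t) = - Equiv.Perm.sign σ := by
      rw [Equiv.Perm.sign_mul, htdef, Equiv.Perm.sign_swap hvab]
      simp
    rw [hsgn]
    push_cast
    ring
  · intro σ hσ _
    intro hcon
    have ht1 : t = 1 := by
      apply mul_left_cancel (a := σ)
      rw [mul_one]
      exact hcon
    apply hvab
    have h1 := congrFun (congrArg (fun (e : Equiv.Perm (Fin m)) => (e : Fin m → Fin m)) ht1) va
    simp only [htdef, Equiv.swap_apply_left, Equiv.Perm.coe_one, id_eq] at h1
    exact h1.symm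
  · intro σ hσ
    exact mul_mem_CG Tm hσ htmem
  · intro σ hσ
    rw [mul_assoc, htdef, Equiv.swap_mul_self, mul_one]

include hlam hm hΛm in
lemma Fm_freemove (x : (Fin k → Fin m) →₀ ℂ) (f₀ : Fin k → Fin m) {u v : Fin m}
    (hu : ¬ (((Tm u) : ℕ × ℕ).2 < k)) (hv : ¬ (((Tm v) : ℕ × ℕ).2 < k)) :
    Fm Tm x (⇑(Equiv.swap u v) ∘ f₀) = Fm Tm x f₀ := by
  set t := Equiv.swap u v with htdef
  unfold Fm
  refine Finset.sum_congr rfl fun σ hσ => ?_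
  congr 1
  have hσu : σ u = u := CG_fix hΛm hlam hσ hu
  have hσv : σ v = v := CG_fix hΛm hlam hσ hv
  have hcomm : ⇑σ ∘ (⇑t ∘ f₀) = ⇑t ∘ (⇑σ ∘ f₀) := by
    funext p
    show σ (t (f₀ p)) = t (σ (f₀ p))
    rcases eq_or_ne (f₀ p) u with he | h1
    · rw [he, htdef]
      rw [Equiv.swap_apply_left, hσv, hσu, Equiv.swap_apply_left]
    · rcases eq_or_ne (f₀ p) v with he | h2
      · rw [he, htdef]
        rw [Equiv.swap_apply_right, hσu, hσv, Equiv.swap_apply_right]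
      · have hs1 : σ (f₀ p) ≠ u := by
          intro hc
          exact h1 (σ.injective (by rw [hσu]; exact hc))
        have hs2 : σ (f₀ p) ≠ v := by
          intro hc
          exact h2 (σ.injective (by rw [hσv]; exact hc))
        rw [htdef, Equiv.swap_apply_of_ne_of_ne h1 h2, Equiv.swap_apply_of_ne_of_ne hs1 hs2]
  rw [hcomm]
  apply Xc_congr
  rw [rel_cf_iff]
  constructor
  · intro p
    show ((Tm (t (σ (f₀ p)))) : ℕ × ℕ).1 = ((Tm (σ (f₀ p))) : ℕ × ℕ).1
    set y := σ (f₀ p)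
    rcases eq_or_ne y u with he | h1
    · rw [he, htdef, Equiv.swap_apply_left]
      have e1 : ((Tm v) : ℕ × ℕ).1 = 0 := noncore_row_zero hΛm hlam (Tm v).2 hv
      have e2 : ((Tm u) : ℕ × ℕ).1 = 0 := noncore_row_zero hΛm hlam (Tm u).2 hu
      rw [e1, e2]
    · rcases eq_or_ne y v with he | h2
      · rw [he, htdef, Equiv.swap_apply_right]
        have e1 : ((Tm v) : ℕ × ℕ).1 = 0 := noncore_row_zero hΛm hlam (Tm v).2 hv
        have e2 : ((Tm u) : ℕ × ℕ).1 = 0 := noncore_row_zero hΛm hlam (Tm u).2 hu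
        rw [e1, e2]
      · rw [htdef, Equiv.swap_apply_of_ne_of_ne h1 h2]
  · intro p q
    constructor
    · intro h
      exact t.injective h
    · intro h
      have h' : σ (f₀ p) = σ (f₀ q) := h
      show t (σ (f₀ p)) = t (σ (f₀ q))
      rw [h']

end CompareC

section CompareD

variable {k n m : ℕ} {lam : YoungDiagram} {Λn Λm : YoungDiagram}
variable (hlam : lam.card ≤ k) (hn : 2 * k ≤ n) (hm : 2 * k ≤ m) (hnm : n ≤ m)
variable (hΛn : Λn.cells = ((Finset.range (n - lam.card)).image fun j => (0, j)) ∪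
      lam.cells.image (fun c => (c.1 + 1, c.2)))
variable (hΛm : Λm.cells = ((Finset.range (m - lam.card)).image fun j => (0, j)) ∪
      lam.cells.image (fun c => (c.1 + 1, c.2)))
variable (Tn : Fin n ≃ Λn.cells) (Tm : Fin m ≃ Λm.cells)

include hlam hn in
lemma counting (f₀ : Fin k → Fin m)
    (hbig : n - lam.card - k <
      ((univ.image f₀).filter (fun v : Fin m => ¬ (((Tm v) : ℕ × ℕ).2 < k))).card) :
    ∃ a ∈ coreCells lam k, ∃ b ∈ coreCells lam k, a ≠ b ∧ a.2 = b.2 ∧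
      (∀ p, cf Tm f₀ p ≠ a) ∧ (∀ p, cf Tm f₀ p ≠ b) := by
  classical
  set U := (univ.image f₀).filter (fun v : Fin m => ¬ (((Tm v) : ℕ × ℕ).2 < k)) with hU
  set PF := univ.filter (fun p : Fin k => ¬ (((Tm (f₀ p)) : ℕ × ℕ).2 < k)) with hPF
  set PC := univ.filter (fun p : Fin k => (((Tm (f₀ p)) : ℕ × ℕ).2 < k)) with hPC
  have hUsub : U ⊆ PF.image f₀ := by
    intro v hv
    rw [hU, mem_filter, mem_image] at hv
    obtain ⟨⟨p, _, hp⟩, hfree⟩ := hv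
    rw [mem_image]
    refine ⟨p, ?_, hp⟩
    rw [hPF, mem_filter]
    exact ⟨mem_univ _, by rw [hp]; exact hfree⟩
  have hUcard : U.card ≤ PF.card := le_trans (Finset.card_le_card hUsub) Finset.card_image_le
  have hPCPF : PC.card + PF.card = k := by
    rw [hPC, hPF]
    have h := Finset.card_filter_add_card_filter_not
      (s := (univ : Finset (Fin k))) (p := fun p => (((Tm (f₀ p)) : ℕ × ℕ).2 < k))
    simpa using h
  set UC := (coreCells lam k).filter (fun c => ∃ p, cf Tm f₀ p = c) with hUCdef
  have hUCsub : UC ⊆ PC.image (cf Tm f₀) := by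
    intro c hc
    rw [hUCdef, mem_filter] at hc
    obtain ⟨hcore, p, hp⟩ := hc
    rw [mem_image]
    refine ⟨p, ?_, hp⟩
    rw [hPC, mem_filter]
    refine ⟨mem_univ _, ?_⟩
    have h2 := coreCells_col_lt hlam hcore
    have h3 : (((Tm (f₀ p)) : ℕ × ℕ)).2 = c.2 := by rw [← hp]; rfl
    omega
  have hUCcard : UC.card ≤ PC.card := le_trans (Finset.card_le_card hUCsub) Finset.card_image_le
  set unused := coreCells lam k \ UC with hunused
  have hcard1 : unused.card + UC.card = (coreCells lam k).card :=
    Finset.card_sdiff_add_card_eq_card (Finset.filter_subset _ _)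
  have hcore := coreCells_card (lam := lam) hlam
  have hku : k + 1 ≤ unused.card := by omega
  have hfib : unused.card = ∑ j ∈ Finset.range k, ((unused.filter (fun c => c.2 = j)).card) := by
    apply Finset.card_eq_sum_card_fiberwise
    intro c hc
    rw [Finset.mem_coe, Finset.mem_range]
    rw [hunused, Finset.mem_coe, Finset.mem_sdiff] at hc
    exact coreCells_col_lt hlam hc.1
  obtain ⟨j, hj2⟩ : ∃ j, 2 ≤ ((unused.filter (fun c => c.2 = j)).card) := by
    by_contra hno
    push_neg at hno
    have hle : ∀ j ∈ Finset.range k, ((unused.filter (fun c => c.2 = j)).card) ≤ 1 := by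
      intro j _
      have := hno j
      omega
    have := Finset.sum_le_card_nsmul (Finset.range k) _ 1 hle
    rw [Finset.card_range, smul_eq_mul, mul_one] at this
    omega
  obtain ⟨a, haf, b, hbf, hab⟩ := Finset.one_lt_card.mp (by omega : 1 < ((unused.filter (fun c => c.2 = j)).card))
  rw [Finset.mem_filter, hunused, Finset.mem_sdiff] at haf hbf
  obtain ⟨⟨hacore, haUC⟩, haj⟩ := haf
  obtain ⟨⟨hbcore, hbUC⟩, hbj⟩ := hbf
  refine ⟨a, hacore, b, hbcore, hab, by rw [haj, hbj], ?_, ?_⟩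
  · intro p hp
    exact haUC (by rw [hUCdef, Finset.mem_filter]; exact ⟨hacore, p, hp⟩)
  · intro p hp
    exact hbUC (by rw [hUCdef, Finset.mem_filter]; exact ⟨hbcore, p, hp⟩)

include hlam hn hm hnm hΛn hΛm in
lemma exists_good_free (f₀ : Fin k → Fin m) {v₀ : Fin m}
    (hv₀img : v₀ ∈ univ.image f₀) (hv₀bad : ((Tm v₀) : ℕ × ℕ) ∉ Λn.cells)
    (hsmall : ((univ.image f₀).filter (fun v : Fin m => ¬ (((Tm v) : ℕ × ℕ).2 < k))).card ≤
      n - lam.card - k) :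
    ∃ v : Fin m, ((Tm v) : ℕ × ℕ) ∈ Λn.cells ∧ ¬ (((Tm v) : ℕ × ℕ).2 < k) ∧
      v ∉ univ.image f₀ := by
  classical
  set U := (univ.image f₀).filter (fun v : Fin m => ¬ (((Tm v) : ℕ × ℕ).2 < k)) with hU
  set GF := univ.filter
    (fun v : Fin m => ((Tm v) : ℕ × ℕ) ∈ Λn.cells ∧ ¬ (((Tm v) : ℕ × ℕ).2 < k)) with hGF
  set CellsF := Λn.cells.filter (fun c => ¬ c.2 < k) with hCellsF
  have hCellsFeq : CellsF = ((Finset.range (n - lam.card)) \ Finset.range k).image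
      (fun j => ((0, j) : ℕ × ℕ)) := by
    ext c
    rw [hCellsF, Finset.mem_filter, Finset.mem_image]
    constructor
    · rintro ⟨hc, hfree⟩
      rw [mem_cells_iff hΛn] at hc
      rcases hc with ⟨h1, h2⟩ | ⟨d, hd, rfl⟩
      · refine ⟨c.2, ?_, ?_⟩
        · rw [Finset.mem_sdiff, Finset.mem_range, Finset.mem_range]
          exact ⟨h2, hfree⟩
        · exact Prod.ext h1.symm rfl
      · have := lam_col_lt_k hlam hd
        exact absurd this hfree
    · rintro ⟨j, hj, rfl⟩
      rw [Finset.mem_sdiff, Finset.mem_range, Finset.mem_range] at hj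
      constructor
      · rw [mem_cells_iff hΛn]
        exact Or.inl ⟨rfl, hj.1⟩
      · exact hj.2
  have hCellsFcard : CellsF.card = n - lam.card - k := by
    rw [hCellsFeq, Finset.card_image_of_injective _ (fun x y hxy => by simpa using hxy),
      Finset.card_sdiff_of_subset (by
        rw [Finset.range_subset_range]
        omega), Finset.card_range, Finset.card_range]
  have hGFcard : GF.card = n - lam.card - k := by
    rw [← hCellsFcard]
    apply Finset.card_bij (fun v _ => ((Tm v) : ℕ × ℕ))
    · intro v hv
      rw [hGF, Finset.mem_filter] at hv
      rw [hCellsF, Finset.mem_filter]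
      exact ⟨hv.2.1, hv.2.2⟩
    · intro v₁ h₁ v₂ h₂ heq
      exact (cell_eq_iff Tm).mp heq
    · intro c hc
      rw [hCellsF, Finset.mem_filter] at hc
      have hcm : c ∈ Λm.cells := cells_sub hnm hΛn hΛm hc.1
      refine ⟨Tm.symm ⟨c, hcm⟩, ?_, ?_⟩
      · rw [hGF, Finset.mem_filter]
        rw [Equiv.apply_symm_apply]
        exact ⟨mem_univ _, hc.1, hc.2⟩
      · rw [Equiv.apply_symm_apply]
  have hv₀U : v₀ ∈ U := by
    rw [hU, Finset.mem_filter]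
    refine ⟨hv₀img, ?_⟩
    intro hcore
    apply hv₀bad
    apply coreCells_subset hΛn hlam hn
    exact (mem_coreCells_iff_of_mem hΛm hlam (Tm v₀).2).mpr hcore
  have hv₀GF : v₀ ∉ GF := by
    rw [hGF, Finset.mem_filter]
    intro hc
    exact hv₀bad hc.2.1
  have hsub : GF ∩ (univ.image f₀) ⊆ U.erase v₀ := by
    intro u hu
    rw [Finset.mem_inter] at hu
    rw [Finset.mem_erase]
    constructor
    · intro hc
      rw [hc] at hu
      exact hv₀GF hu.1
    · rw [hU, Finset.mem_filter]
      refine ⟨hu.2, ?_⟩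
      rw [hGF, Finset.mem_filter] at hu
      exact hu.1.2.2
  have hcard2 : (GF ∩ (univ.image f₀)).card < GF.card := by
    have h3 := Finset.card_le_card hsub
    have h4 := Finset.card_erase_of_mem hv₀U
    have h5 := Finset.card_pos.mpr ⟨v₀, hv₀U⟩
    omega
  obtain ⟨v, hvGF, hvnot⟩ : ∃ v ∈ GF, v ∉ univ.image f₀ := by
    by_contra hno
    push_neg at hno
    have : GF ⊆ GF ∩ (univ.image f₀) := by
      intro v hv
      rw [Finset.mem_inter]
      exact ⟨hv, hno v hv⟩
    have := Finset.card_le_card this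
    omega
  rw [hGF, Finset.mem_filter] at hvGF
  exact ⟨v, hvGF.2.1, hvGF.2.2, hvnot⟩

end CompareD

section CompareE

variable {k n m : ℕ} {lam : YoungDiagram} {Λn Λm : YoungDiagram}
variable (hlam : lam.card ≤ k) (hn : 2 * k ≤ n) (hm : 2 * k ≤ m) (hnm : n ≤ m)
variable (hΛn : Λn.cells = ((Finset.range (n - lam.card)).image fun j => (0, j)) ∪
      lam.cells.image (fun c => (c.1 + 1, c.2)))
variable (hΛm : Λm.cells = ((Finset.range (m - lam.card)).image fun j => (0, j)) ∪
      lam.cells.image (fun c => (c.1 + 1, c.2)))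
variable (Tn : Fin n ≃ Λn.cells) (Tm : Fin m ≃ Λm.cells)

include hlam hn hm hnm hΛn hΛm in
lemma Fm_of_no_bad (x : (Fin k → Fin m) →₀ ℂ)
    (hx : ∀ g₀ : Fin k → Fin n, Fn Tn Tm x g₀ = 0) (f₀ : Fin k → Fin m)
    (hall : ∀ p, ((Tm (f₀ p)) : ℕ × ℕ) ∈ Λn.cells) : Fm Tm x f₀ = 0 := by
  set g₀ : Fin k → Fin n := fun p => Tn.symm ⟨((Tm (f₀ p)) : ℕ × ℕ), hall p⟩ with hg₀
  have hembg : emb hnm hΛn hΛm Tn Tm ∘ g₀ = f₀ := by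
    funext p
    apply Tm.injective
    apply Subtype.ext
    show ((Tm (emb hnm hΛn hΛm Tn Tm (g₀ p))) : ℕ × ℕ) = ((Tm (f₀ p)) : ℕ × ℕ)
    rw [emb_cell, hg₀]
    show ((Tn (Tn.symm ⟨((Tm (f₀ p)) : ℕ × ℕ), hall p⟩)) : ℕ × ℕ) = _
    rw [Equiv.apply_symm_apply]
  rw [← hembg, ← transport hlam hn hm hnm hΛn hΛm Tn Tm x g₀]
  exact hx g₀

include hlam hn hm hnm hΛn hΛm in
lemma key (x : (Fin k → Fin m) →₀ ℂ)
    (hx : ∀ g₀ : Fin k → Fin n, Fn Tn Tm x g₀ = 0) :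
    ∀ f₀ : Fin k → Fin m, Fm Tm x f₀ = 0 := by
  suffices H : ∀ N : ℕ, ∀ f₀ : Fin k → Fin m,
      ((univ.image f₀).filter (fun v : Fin m => ((Tm v) : ℕ × ℕ) ∉ Λn.cells)).card ≤ N →
        Fm Tm x f₀ = 0 by
    intro f₀
    exact H _ f₀ le_rfl
  intro N
  induction N with
  | zero =>
    intro f₀ h0
    apply Fm_of_no_bad hlam hn hm hnm hΛn hΛm Tn Tm x hx f₀
    intro p
    by_contra hc
    have hmem : f₀ p ∈ (univ.image f₀).filter
        (fun v : Fin m => ((Tm v) : ℕ × ℕ) ∉ Λn.cells) := by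
      rw [Finset.mem_filter, Finset.mem_image]
      exact ⟨⟨p, mem_univ _, rfl⟩, hc⟩
    have := Finset.card_pos.mpr ⟨_, hmem⟩
    omega
  | succ N ih =>
    intro f₀ hN
    by_cases h0 : ((univ.image f₀).filter
        (fun v : Fin m => ((Tm v) : ℕ × ℕ) ∉ Λn.cells)).card = 0
    · apply Fm_of_no_bad hlam hn hm hnm hΛn hΛm Tn Tm x hx f₀
      intro p
      by_contra hc
      have hmem : f₀ p ∈ (univ.image f₀).filter
          (fun v : Fin m => ((Tm v) : ℕ × ℕ) ∉ Λn.cells) := by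
        rw [Finset.mem_filter, Finset.mem_image]
        exact ⟨⟨p, mem_univ _, rfl⟩, hc⟩
      have := Finset.card_pos.mpr ⟨_, hmem⟩
      omega
    · obtain ⟨v₀, hv₀⟩ : ∃ v₀, v₀ ∈ (univ.image f₀).filter
          (fun v : Fin m => ((Tm v) : ℕ × ℕ) ∉ Λn.cells) := by
        apply Finset.Nonempty.exists_mem
        rw [Finset.nonempty_iff_ne_empty]
        intro hc
        rw [hc] at h0
        simp at h0
      rw [Finset.mem_filter] at hv₀
      obtain ⟨hv₀img, hv₀bad⟩ := hv₀
      have hv₀free : ¬ (((Tm v₀) : ℕ × ℕ).2 < k) := by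
        intro hcore
        apply hv₀bad
        apply coreCells_subset hΛn hlam hn
        exact (mem_coreCells_iff_of_mem hΛm hlam (Tm v₀).2).mpr hcore
      by_cases hbig : n - lam.card - k <
          ((univ.image f₀).filter (fun v : Fin m => ¬ (((Tm v) : ℕ × ℕ).2 < k))).card
      · obtain ⟨a, ha, b, hb, hab, hcol, hua, hub⟩ := counting hlam hn Tm f₀ hbig
        exact Fm_cancel hlam hm hΛm Tm x f₀ ha hb hab hcol hua hub
      · obtain ⟨v, hvcells, hvfree, hvnot⟩ := exists_good_free hlam hn hm hnm hΛn hΛm Tm f₀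
          hv₀img hv₀bad (not_lt.mp hbig)
        rw [← Fm_freemove hlam hm hΛm Tm x f₀ (u := v₀) (v := v) hv₀free hvfree]
        apply ih
        have hsub : (univ.image (⇑(Equiv.swap v₀ v) ∘ f₀)).filter
            (fun u : Fin m => ((Tm u) : ℕ × ℕ) ∉ Λn.cells) ⊆
            ((univ.image f₀).filter
              (fun u : Fin m => ((Tm u) : ℕ × ℕ) ∉ Λn.cells)).erase v₀ := by
          intro u hu
          rw [Finset.mem_filter, Finset.mem_image] at hu
          obtain ⟨⟨p, _, hp⟩, hubad⟩ := hu
          have hp' : Equiv.swap v₀ v (f₀ p) = u := hp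
          rcases eq_or_ne (f₀ p) v₀ with he | h1
          · rw [he, Equiv.swap_apply_left] at hp'
            rw [← hp'] at hubad
            exact absurd hvcells hubad
          · rcases eq_or_ne (f₀ p) v with he | h2
            · exfalso
              apply hvnot
              rw [Finset.mem_image]
              exact ⟨p, mem_univ _, he⟩
            · rw [Equiv.swap_apply_of_ne_of_ne h1 h2] at hp'
              rw [Finset.mem_erase]
              constructor
              · rw [← hp']
                exact h1
              · rw [Finset.mem_filter, Finset.mem_image]
                exact ⟨⟨p, mem_univ _, hp'⟩, hubad⟩
        have hv₀mem : v₀ ∈ (univ.image f₀).filter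
            (fun u : Fin m => ((Tm u) : ℕ × ℕ) ∉ Λn.cells) := by
          rw [Finset.mem_filter]
          exact ⟨hv₀img, hv₀bad⟩
        have h3 := Finset.card_le_card hsub
        have h4 := Finset.card_erase_of_mem hv₀mem
        omega

end CompareE

section CompareF

variable {k n m : ℕ} {lam : YoungDiagram} {Λn Λm : YoungDiagram}
variable (hlam : lam.card ≤ k) (hn : 2 * k ≤ n) (hm : 2 * k ≤ m) (hnm : n ≤ m)
variable (hΛn : Λn.cells = ((Finset.range (n - lam.card)).image fun j => (0, j)) ∪
      lam.cells.image (fun c => (c.1 + 1, c.2)))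
variable (hΛm : Λm.cells = ((Finset.range (m - lam.card)).image fun j => (0, j)) ∪
      lam.cells.image (fun c => (c.1 + 1, c.2)))
variable (Tn : Fin n ≃ Λn.cells) (Tm : Fin m ≃ Λm.cells)

include hnm hΛn hΛm in
lemma range_Phin : LinearMap.range (Phin Tn Tm) =
    LinearMap.range ((tensorPermRep n k).asAlgebraHom (youngSymmetrizer Tn)) := by
  rw [range_young Tn, Phin, Finsupp.range_linearCombination]
  apply le_antisymm
  · rw [Submodule.span_le]
    rintro v ⟨f, rfl⟩
    dsimp only
    by_cases hreal : ∃ g : Fin k → Fin n, Rel (cf Tn g) (cf Tm f)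
    · obtain ⟨g, hg⟩ := hreal
      rw [show w Tn (cf Tm f) = w Tn (cf Tn g) from w_congr Tn hg.symm]
      exact Submodule.subset_span ⟨g, rfl⟩
    · push_neg at hreal
      rw [w_zero Tn hreal]
      exact Submodule.zero_mem _
  · rw [Submodule.span_le]
    rintro v ⟨g, rfl⟩
    dsimp only
    have hcf : cf Tm (emb hnm hΛn hΛm Tn Tm ∘ g) = cf Tn g := by
      funext p
      show ((Tm (emb hnm hΛn hΛm Tn Tm (g p))) : ℕ × ℕ) = _
      rw [emb_cell]
      rfl
    rw [← hcf]
    exact Submodule.subset_span ⟨emb hnm hΛn hΛm Tn Tm ∘ g, rfl⟩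

lemma range_Phim : LinearMap.range (Phim Tm) =
    LinearMap.range ((tensorPermRep m k).asAlgebraHom (youngSymmetrizer Tm)) := by
  rw [range_young Tm, Phim, Finsupp.range_linearCombination]

include hlam hn hm hnm hΛn hΛm in
lemma ker_Phin_eq_ker_Phim :
    LinearMap.ker (Phin (k := k) Tn Tm) = LinearMap.ker (Phim (k := k) Tm) := by
  ext x
  rw [LinearMap.mem_ker, LinearMap.mem_ker, Phin_zero_iff, Phim_zero_iff]
  constructor
  · intro h
    exact key hlam hn hm hnm hΛn hΛm Tn Tm x h
  · intro h g₀
    rw [transport hlam hn hm hnm hΛn hΛm Tn Tm x g₀]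
    exact h _

include hlam hn hm hnm hΛn hΛm in
lemma mult_eq_aux : tensorMultiplicity n k Tn = tensorMultiplicity m k Tm := by
  have h1 := LinearMap.finrank_range_add_finrank_ker (Phin (k := k) Tn Tm)
  have h2 := LinearMap.finrank_range_add_finrank_ker (Phim (k := k) Tm)
  rw [ker_Phin_eq_ker_Phim hlam hn hm hnm hΛn hΛm Tn Tm] at h1
  unfold tensorMultiplicity
  rw [← range_Phin hnm hΛn hΛm Tn Tm, ← range_Phim Tm]
  omega

end CompareF

end TensorStab

theorem tensor_multiplicity_stable (k : ℕ) (lam : YoungDiagram) (hlam : lam.card ≤ k)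
    (n m : ℕ) (hn : 2 * k ≤ n) (hm : 2 * k ≤ m)
    (Λn Λm : YoungDiagram)
    (hΛn : Λn.cells = ((Finset.range (n - lam.card)).image fun j => (0, j)) ∪
      lam.cells.image (fun c => (c.1 + 1, c.2)))
    (hΛm : Λm.cells = ((Finset.range (m - lam.card)).image fun j => (0, j)) ∪
      lam.cells.image (fun c => (c.1 + 1, c.2)))
    (Tn : Fin n ≃ Λn.cells) (Tm : Fin m ≃ Λm.cells) :
    tensorMultiplicity n k Tn = tensorMultiplicity m k Tm := by
  rcases le_total n m with hnm | hnm
  · exact TensorStab.mult_eq_aux hlam hn hm hnm hΛn hΛm Tn Tm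
  · exact (TensorStab.mult_eq_aux hlam hm hn hnm hΛm hΛn Tm Tn).symm
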